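/- (Lambe–Stasheff side conditions.) Let (C,d_C) and (D,d_D) be chain complexes over 𝔽₂, let f : C → D and g : D → C be chain maps, and let T : C → C be a linear map such that f∘g = id_D and id_C + g∘f = d_C∘T + T∘d_C. Set T' = (id_C + g∘f)∘T∘(id_C + g∘f) and T'' = T'∘d_C∘T'. Then id_C + g∘f = d_C∘T'' + T''∘d_C, and moreover f∘T'' = 0, T''∘g = 0, and T''∘T'' = 0; that is, (f, g, T'') is a strong deformation retraction from C to D. -/
import Mathlib

lemma char2_add_self {M : Type*} [AddCommGroup M] [Module (ZMod 2) M] (x : M) :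
    x + x = 0 := by
  have : x + x = ((1 : ZMod 2) + 1) • x := by rw [add_smul, one_smul]
  rw [this, show (1 : ZMod 2) + 1 = 0 by decide, zero_smul]

theorem auxring {R : Type*} [Ring R] (h2 : ∀ x : R, x + x = 0)
    (d t p : R) (hd : d * d = 0) (hdp : d * p = p * d) (hpp : p * p = p)
    (hp : p = d * t + t * d) :
    p = d * (p*t*p*d*(p*t*p)) + (p*t*p*d*(p*t*p)) * d ∧
    p * (p*t*p*d*(p*t*p)) = p*t*p*d*(p*t*p) ∧
    (p*t*p*d*(p*t*p)) * p = p*t*p*d*(p*t*p) ∧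
    (p*t*p*d*(p*t*p)) * (p*t*p*d*(p*t*p)) = 0 := by
  set t' := p*t*p with ht'
  have c1 : t' * p = t' := by rw [ht', mul_assoc, hpp]
  have c2 : p * t' = t' := by rw [ht', ← mul_assoc, ← mul_assoc, hpp]
  have e1 : d * t' = p * (d*t) * p := by
    calc d * t' = (d*p)*t*p := by rw [ht']; noncomm_ring
      _ = (p*d)*t*p := by rw [hdp]
      _ = p * (d*t) * p := by noncomm_ring
  have e2 : t' * d = p * (t*d) * p := by
    calc t' * d = p*t*(p*d) := by rw [ht']; noncomm_ring
      _ = p*t*(d*p) := by rw [← hdp]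
      _ = p * (t*d) * p := by noncomm_ring
  have c5 : d * t' + t' * d = p := by
    rw [e1, e2]
    calc p * (d*t) * p + p * (t*d) * p = p * (d*t + t*d) * p := by noncomm_ring
      _ = p * p * p := by rw [← hp]
      _ = p := by rw [hpp, hpp]
  have hdt : d * t' = p + t' * d := by
    rw [← c5, add_assoc, h2, add_zero]
  have hA : d * (t'*d*t') = d * t' := by
    calc d * (t'*d*t') = (d*t')*(d*t') := by noncomm_ring
      _ = (p + t'*d)*(d*t') := by rw [← hdt]
      _ = p*(d*t') + t'*(d*d)*t' := by noncomm_ring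
      _ = (p*d)*t' := by rw [hd]; noncomm_ring
      _ = (d*p)*t' := by rw [hdp]
      _ = d*(p*t') := by noncomm_ring
      _ = d * t' := by rw [c2]
  have hB : (t'*d*t')*d = t' * d := by
    calc (t'*d*t')*d = t'*((d*t')*d) := by noncomm_ring
      _ = t'*((p + t'*d)*d) := by rw [hdt]
      _ = (t'*p)*d + t'*t'*(d*d) := by noncomm_ring
      _ = t' * d := by rw [hd, c1]; noncomm_ring
  have hC : (d*t')*(t'*d) = 0 := by
    calc (d*t')*(t'*d) = (p + t'*d)*(t'*d) := by rw [← hdt]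
      _ = (p*t')*d + (t'*d*t')*d := by noncomm_ring
      _ = t'*d + t'*d := by rw [hB, c2]
      _ = 0 := h2 _
  refine ⟨?_, ?_, ?_, ?_⟩
  · calc p = d * t' + t' * d := c5.symm
      _ = d * (t'*d*t') + (t'*d*t') * d := by rw [hA, hB]
  · calc p * (t'*d*t') = (p*t')*(d*t') := by noncomm_ring
      _ = t'*(d*t') := by rw [c2]
      _ = t'*d*t' := by noncomm_ring
  · calc (t'*d*t')*p = (t'*d)*(t'*p) := by noncomm_ring
      _ = (t'*d)*t' := by rw [c1]
  · calc (t'*d*t')*(t'*d*t') = t'*((d*t')*(t'*d))*t' := by noncomm_ring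
      _ = 0 := by rw [hC, mul_zero, zero_mul]

/-- Lambe–Stasheff side conditions: given chain complexes `(C, d_C)` and
`(D, d_D)` over `𝔽₂`, chain maps `f : C → D`, `g : D → C` with `f ∘ g = id` and a homotopy
`T` with `id + g∘f = d_C∘T + T∘d_C`, the modified homotopy `T'' = T'∘d_C∘T'`, where
`T' = (id + g∘f)∘T∘(id + g∘f)`, still satisfies `id + g∘f = d_C∘T'' + T''∘d_C` and moreover
`f∘T'' = 0`, `T''∘g = 0`, `T''∘T'' = 0`; that is, `(f, g, T'')` is a strong deformation
retraction from `C` to `D`. -/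
theorem statement10 {C D : Type*} [AddCommGroup C] [Module (ZMod 2) C]
    [AddCommGroup D] [Module (ZMod 2) D]
    (dC : C →ₗ[ZMod 2] C) (dD : D →ₗ[ZMod 2] D)
    (hdC : dC ∘ₗ dC = 0) (hdD : dD ∘ₗ dD = 0)
    (f : C →ₗ[ZMod 2] D) (g : D →ₗ[ZMod 2] C)
    (hf : dD ∘ₗ f = f ∘ₗ dC) (hg : dC ∘ₗ g = g ∘ₗ dD)
    (T : C →ₗ[ZMod 2] C)
    (hfg : f ∘ₗ g = LinearMap.id)
    (hT : LinearMap.id + g ∘ₗ f = dC ∘ₗ T + T ∘ₗ dC) :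
    ∀ T' T'' : C →ₗ[ZMod 2] C,
      T' = (LinearMap.id + g ∘ₗ f) ∘ₗ T ∘ₗ (LinearMap.id + g ∘ₗ f) →
      T'' = T' ∘ₗ dC ∘ₗ T' →
      (LinearMap.id + g ∘ₗ f = dC ∘ₗ T'' + T'' ∘ₗ dC) ∧
      f ∘ₗ T'' = 0 ∧ T'' ∘ₗ g = 0 ∧ T'' ∘ₗ T'' = 0 := by
  intro T' T'' hT' hT''
  set p : C →ₗ[ZMod 2] C := LinearMap.id + g ∘ₗ f with hpdef
  have hfp : f ∘ₗ p = 0 := by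
    rw [hpdef, LinearMap.comp_add, LinearMap.comp_id, ← LinearMap.comp_assoc, hfg,
      LinearMap.id_comp]
    exact char2_add_self f
  have hpg : p ∘ₗ g = 0 := by
    rw [hpdef, LinearMap.add_comp, LinearMap.id_comp, LinearMap.comp_assoc, hfg,
      LinearMap.comp_id]
    exact char2_add_self g
  -- commutation of p with dC
  have hdgf : dC ∘ₗ (g ∘ₗ f) = (g ∘ₗ f) ∘ₗ dC := by
    rw [← LinearMap.comp_assoc, hg, LinearMap.comp_assoc, hf, ← LinearMap.comp_assoc]
  have hdp : dC ∘ₗ p = p ∘ₗ dC := by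
    rw [hpdef, LinearMap.comp_add, LinearMap.add_comp, LinearMap.comp_id, LinearMap.id_comp,
      hdgf]
  have hpp : p ∘ₗ p = p := by
    calc p ∘ₗ p = p ∘ₗ (LinearMap.id + g ∘ₗ f) := by rw [← hpdef]
      _ = p + (p ∘ₗ g) ∘ₗ f := by
        rw [LinearMap.comp_add, LinearMap.comp_id, ← LinearMap.comp_assoc]
      _ = p := by rw [hpg, LinearMap.zero_comp, add_zero]
  -- pass to the endomorphism ring
  have key := auxring (R := Module.End (ZMod 2) C) (fun x => char2_add_self x) dC T p hdC hdp hpp hT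
  have hT'eq : T' = p * T * p := by
    rw [hT', hpdef]; rfl
  have hT''eq : T'' = p*T*p*dC*(p*T*p) := by
    rw [hT'', hT'eq]; rfl
  obtain ⟨k1, k2, k3, k4⟩ := key
  refine ⟨?_, ?_, ?_, ?_⟩
  · show p = dC ∘ₗ T'' + T'' ∘ₗ dC
    rw [hT''eq]; exact k1
  · rw [hT''eq, show p*T*p*dC*(p*T*p) = p ∘ₗ (T*p*dC*(p*T*p)) from by
      simp only [Module.End.mul_eq_comp, LinearMap.comp_assoc]]
    rw [← LinearMap.comp_assoc, hfp, LinearMap.zero_comp]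
  · have tp : T'' ∘ₗ p = T'' := by rw [hT''eq]; exact k3
    calc T'' ∘ₗ g = (T'' ∘ₗ p) ∘ₗ g := by rw [tp]
      _ = T'' ∘ₗ (p ∘ₗ g) := by rw [LinearMap.comp_assoc]
      _ = 0 := by rw [hpg, LinearMap.comp_zero]
  · rw [hT''eq, show (p*T*p*dC*(p*T*p)) ∘ₗ (p*T*p*dC*(p*T*p))
        = (p*T*p*dC*(p*T*p)) * (p*T*p*dC*(p*T*p)) from rfl, k4]
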